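/- Let q = u·v with gcd(u, v) = 1, let b be coprime to u, a coprime to q, and let v̄ satisfy v̄·v ≡ 1 (mod u). Then ∑_{1 ≤ c ≤ q, gcd(c,q)=1, c ≡ b (mod u)} e(ac/q) = μ(v) · e(a·b·v̄/u), where e(x) = exp(2πi x) and μ is the Möbius function. If instead gcd(u, v) > 1 (with u = gcd of the modulus condition), the sum vanishes. -/

import Mathlib

open ArithmeticFunction Finset Complex



noncomputable def fe (n : ℕ) (m : ℤ) : ℂ :=
  Complex.exp (2 * Real.pi * Complex.I * ((m : ℝ) / (n : ℝ)))

lemma fe_congr {n : ℕ} (hn : 0 < n) {m m' : ℤ} (h : (n : ℤ) ∣ m - m') :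
    fe n m = fe n m' := by
  obtain ⟨k, hk⟩ := h
  have hm : m = m' + n * k := by linarith
  have hn' : (n : ℂ) ≠ 0 := Nat.cast_ne_zero.mpr hn.ne'
  have key : (2 * Real.pi * Complex.I : ℂ) * (((m' + (n:ℤ) * k : ℤ) : ℝ) / (n : ℝ))
      = 2 * Real.pi * Complex.I * ((m' : ℝ) / (n : ℝ)) + (k : ℤ) * (2 * Real.pi * Complex.I) := by
    push_cast
    field_simp
  unfold fe
  rw [hm, key, Complex.exp_add, Complex.exp_int_mul_two_pi_mul_I, mul_one]

lemma fe_mul (n : ℕ) (m m' : ℤ) : fe n m * fe n m' = fe n (m + m') := by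
  unfold fe
  rw [← Complex.exp_add]
  congr 1
  push_cast
  ring

lemma fe_amp {n k : ℕ} (hk : 0 < k) (m : ℤ) : fe n m = fe (n * k) (m * k) := by
  unfold fe
  congr 2
  push_cast
  rcases Nat.eq_zero_or_pos n with h | h
  · simp [h]
  · have hn' : (n : ℂ) ≠ 0 := Nat.cast_ne_zero.mpr h.ne'
    have hk' : (k : ℂ) ≠ 0 := Nat.cast_ne_zero.mpr hk.ne'
    field_simp

lemma fe_eq_one_iff {n : ℕ} (hn : 0 < n) {m : ℤ} : fe n m = 1 ↔ (n : ℤ) ∣ m := by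
  have hn' : (n : ℂ) ≠ 0 := Nat.cast_ne_zero.mpr hn.ne'
  have hnR : (n : ℝ) ≠ 0 := Nat.cast_ne_zero.mpr hn.ne'
  have hne : (2 : ℂ) * Real.pi * I ≠ 0 := by
    simp [Real.pi_ne_zero, Complex.I_ne_zero]
  unfold fe
  rw [Complex.exp_eq_one_iff]
  constructor
  · rintro ⟨k, hk⟩
    refine ⟨k, ?_⟩
    have h2 := mul_left_cancel₀ hne (hk.trans (by ring))
    have h3 : (m : ℝ) / (n : ℝ) = (k : ℝ) := by exact_mod_cast h2
    have h4 : (m : ℝ) = (n : ℝ) * (k : ℝ) := by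
      field_simp at h3
      linarith
    exact_mod_cast h4
  · rintro ⟨k, hk⟩
    refine ⟨k, ?_⟩
    rw [hk]
    push_cast
    field_simp



lemma moebius_indicator (m v : ℕ) (hv : 0 < v) :
    (if Nat.Coprime m v then (1:ℂ) else 0)
      = ∑ d ∈ v.divisors, if d ∣ m then ((moebius d : ℤ) : ℂ) else 0 := by
  have hset : v.divisors.filter (· ∣ m) = (Nat.gcd m v).divisors := by
    ext d
    simp only [Finset.mem_filter, Nat.mem_divisors, Nat.dvd_gcd_iff]
    constructor
    · rintro ⟨⟨h1, h2⟩, h3⟩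
      exact ⟨⟨h3, h1⟩, Nat.gcd_ne_zero_right hv.ne'⟩
    · rintro ⟨⟨h1, h2⟩, h3⟩
      exact ⟨⟨h2, hv.ne'⟩, h1⟩
  have hsum : (∑ d ∈ (Nat.gcd m v).divisors, (moebius d : ℤ))
      = if Nat.gcd m v = 1 then 1 else 0 := by
    have h1 : ((moebius * ArithmeticFunction.zeta : ArithmeticFunction ℤ)) (Nat.gcd m v)
        = ∑ d ∈ (Nat.gcd m v).divisors, (moebius d : ℤ) :=
      ArithmeticFunction.coe_mul_zeta_apply
    rw [moebius_mul_coe_zeta] at h1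
    rw [← h1, ArithmeticFunction.one_apply]
  rw [← Finset.sum_filter, hset]
  have h2 : ((∑ d ∈ (Nat.gcd m v).divisors, (moebius d : ℤ) : ℤ) : ℂ)
      = ∑ d ∈ (Nat.gcd m v).divisors, ((moebius d : ℤ) : ℂ) := by push_cast; rfl
  rw [← h2, hsum]
  unfold Nat.Coprime
  split <;> simp

lemma moebius_expand (v : ℕ) (hv : 0 < v) (c : ℕ → ℕ) (g : ℕ → ℂ) :
    ∑ t ∈ (Finset.range v).filter (fun t => Nat.Coprime (c t) v), g t
      = ∑ d ∈ v.divisors, ((moebius d : ℤ) : ℂ) *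
          ∑ t ∈ (Finset.range v).filter (fun t => d ∣ c t), g t := by
  rw [Finset.sum_filter]
  have step1 : ∀ t, (if Nat.Coprime (c t) v then g t else 0)
      = ∑ d ∈ v.divisors, (if d ∣ c t then ((moebius d : ℤ) : ℂ) else 0) * g t := by
    intro t
    rw [← Finset.sum_mul, ← moebius_indicator _ _ hv]
    split <;> simp
  simp_rw [step1]
  rw [Finset.sum_comm]
  refine Finset.sum_congr rfl fun d _ => ?_
  rw [Finset.mul_sum, Finset.sum_filter]
  refine Finset.sum_congr rfl fun t _ => ?_
  split <;> simp

lemma fe_mod (v : ℕ) (hv : 0 < v) (a x : ℕ) :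
    fe v ((a : ℤ) * ((x % v : ℕ) : ℤ)) = fe v ((a : ℤ) * (x : ℤ)) := by
  refine fe_congr hv ?_
  have h1 : (v : ℤ) ∣ (x : ℤ) - ((x % v : ℕ) : ℤ) := (Nat.mod_modEq x v).dvd
  have h2 : (a : ℤ) * ((x % v : ℕ) : ℤ) - (a : ℤ) * (x : ℤ)
      = -((a : ℤ) * ((x : ℤ) - ((x % v : ℕ) : ℤ))) := by ring
  rw [h2]
  exact (h1.mul_left _).neg_right

lemma J_zero (v a d b' u : ℕ) (hv : 0 < v) (hav : Nat.Coprime a v) (hd : d ∣ v)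
    (hdlt : d < v) :
    ∑ t ∈ (range v).filter (fun t => d ∣ b' + u * t), fe v ((a : ℤ) * t) = 0 := by
  have hdle : d ≤ v := hdlt.le
  set P := (range v).filter (fun t => d ∣ b' + u * t) with hP
  set S := ∑ t ∈ P, fe v ((a : ℤ) * t) with hS
  have mem_shift : ∀ e, d ∣ e → ∀ t ∈ P, (t + e) % v ∈ P := by
    intro e he t ht
    rw [hP, mem_filter, mem_range] at ht ⊢
    obtain ⟨ht1, ht2⟩ := ht
    refine ⟨Nat.mod_lt _ hv, ?_⟩
    have h1 : (t + e) % v ≡ t + e [MOD d] := (Nat.mod_modEq (t + e) v).of_dvd hd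
    have h2 : b' + u * ((t + e) % v) ≡ b' + u * (t + e) [MOD d] :=
      Nat.ModEq.add_left _ (h1.mul_left u)
    have h3 : d ∣ b' + u * (t + e) := by
      have hx : b' + u * (t + e) = (b' + u * t) + u * e := by ring
      rw [hx]
      exact Nat.dvd_add ht2 (he.mul_left u)
    exact (Nat.modEq_zero_iff_dvd).mp (h2.trans ((Nat.modEq_zero_iff_dvd).mpr h3))
  have left_inv : ∀ t ∈ P, ((t + (v - d)) % v + d) % v = t := by
    intro t ht
    rw [hP, mem_filter, mem_range] at ht
    rw [Nat.mod_add_mod]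
    have hx : t + (v - d) + d = t + v := by omega
    rw [hx, Nat.add_mod_right, Nat.mod_eq_of_lt ht.1]
  have right_inv : ∀ t ∈ P, ((t + d) % v + (v - d)) % v = t := by
    intro t ht
    rw [hP, mem_filter, mem_range] at ht
    rw [Nat.mod_add_mod]
    have hx : t + d + (v - d) = t + v := by omega
    rw [hx, Nat.add_mod_right, Nat.mod_eq_of_lt ht.1]
  have key : S = ∑ t ∈ P, fe v ((a : ℤ) * (((t + d) % v : ℕ) : ℤ)) := by
    rw [hS]
    refine Finset.sum_nbij' (fun t => (t + (v - d)) % v) (fun t => (t + d) % v)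
      (fun t ht => mem_shift (v - d) (Nat.dvd_sub hd dvd_rfl) t ht)
      (fun t ht => mem_shift d dvd_rfl t ht)
      left_inv right_inv ?_
    intro t ht
    rw [left_inv t ht]
  have key2 : S = fe v ((a : ℤ) * d) * S := by
    have step : ∑ t ∈ P, fe v ((a : ℤ) * (((t + d) % v : ℕ) : ℤ))
        = fe v ((a : ℤ) * d) * S := by
      rw [hS, Finset.mul_sum]
      refine Finset.sum_congr rfl fun t ht => ?_
      rw [fe_mod v hv a (t + d), fe_mul]
      congr 1
      push_cast
      ring
    exact key.trans step
  have hne : fe v ((a : ℤ) * d) ≠ 1 := by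
    intro h
    rw [fe_eq_one_iff hv] at h
    have h' : v ∣ a * d := by exact_mod_cast h
    have h2 : v ∣ d := (Nat.Coprime.dvd_of_dvd_mul_left (hav.symm) h')
    have hd0 : 0 < d := Nat.pos_of_dvd_of_pos hd hv
    have : v ≤ d := Nat.le_of_dvd hd0 h2
    omega
  have hz : (fe v ((a : ℤ) * d) - 1) * S = 0 := by
    rw [sub_mul, one_mul, ← key2, sub_self]
  rcases mul_eq_zero.mp hz with h | h
  · exact absurd (by linear_combination h : fe v ((a:ℤ)*d) = 1) hne
  · exact h


lemma Jv_empty (v u b' : ℕ) (hv : 0 < v) (huv : ¬ Nat.Coprime u v) (hb' : Nat.Coprime b' u) :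
    (range v).filter (fun t => v ∣ b' + u * t) = ∅ := by
  rw [Finset.eq_empty_iff_forall_notMem]
  intro t ht
  rw [mem_filter] at ht
  obtain ⟨-, hdvd⟩ := ht
  set g := Nat.gcd u v with hg
  have hgu : g ∣ u := Nat.gcd_dvd_left u v
  have hgv : g ∣ v := Nat.gcd_dvd_right u v
  have hgb : g ∣ b' := by
    have h1 : g ∣ b' + u * t := dvd_trans hgv hdvd
    have h2 : g ∣ u * t := hgu.mul_right t
    exact (Nat.dvd_add_right h2).mp (by rwa [add_comm] at h1)
  have : g ∣ 1 := by
    have := Nat.dvd_gcd hgb hgu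
    rwa [hb'] at this
  exact huv (Nat.eq_one_of_dvd_one this)

lemma Jv_singleton (v u b' : ℕ) (hv : 0 < v) (huv : Nat.Coprime u v) :
    ∃ t₀, t₀ < v ∧ v ∣ b' + u * t₀ ∧
      (range v).filter (fun t => v ∣ b' + u * t) = {t₀} := by
  haveI : NeZero v := ⟨hv.ne'⟩
  set w : (ZMod v)ˣ := ZMod.unitOfCoprime u huv with hw
  have hwu : (w : ZMod v) = (u : ZMod v) := ZMod.coe_unitOfCoprime u huv
  have hw1 : ((w⁻¹ : (ZMod v)ˣ) : ZMod v) * (w : ZMod v) = 1 := by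
    rw [← Units.val_mul]; simp
  set x : ZMod v := -(b' : ZMod v) * ((w⁻¹ : (ZMod v)ˣ) : ZMod v) with hx
  have hkey : v ∣ b' + u * x.val := by
    have h : ((b' + u * x.val : ℕ) : ZMod v) = 0 := by
      push_cast
      rw [ZMod.natCast_val, ZMod.cast_id, hx]
      have h2 : (u : ZMod v) * (-(b' : ZMod v) * ((w⁻¹ : (ZMod v)ˣ) : ZMod v))
          = -(b' : ZMod v) * (((w⁻¹ : (ZMod v)ˣ) : ZMod v) * (w : ZMod v)) := by
        rw [hwu]; ring
      rw [h2, hw1]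
      ring
    exact (ZMod.natCast_eq_zero_iff _ _).mp h
  refine ⟨x.val, ZMod.val_lt x, hkey, ?_⟩
  rw [Finset.eq_singleton_iff_unique_mem]
  constructor
  · rw [mem_filter, mem_range]
    exact ⟨ZMod.val_lt x, hkey⟩
  · intro t ht
    rw [mem_filter, mem_range] at ht
    obtain ⟨htv, hdvd⟩ := ht
    have h0 : ((b' + u * t : ℕ) : ZMod v) = 0 :=
      (ZMod.natCast_eq_zero_iff _ _).mpr hdvd
    push_cast at h0
    have h1 : (u : ZMod v) * (t : ZMod v) = -(b' : ZMod v) := by linear_combination h0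
    have hts : (t : ZMod v) = x :=
      calc (t : ZMod v) = (((w⁻¹ : (ZMod v)ˣ) : ZMod v) * (w : ZMod v)) * t := by
            rw [hw1, one_mul]
        _ = ((w⁻¹ : (ZMod v)ˣ) : ZMod v) * ((u : ZMod v) * t) := by rw [hwu]; ring
        _ = ((w⁻¹ : (ZMod v)ˣ) : ZMod v) * (-(b' : ZMod v)) := by rw [h1]
        _ = x := by rw [hx]; ring
    have := congrArg ZMod.val hts
    rwa [ZMod.val_cast_of_lt htv] at this

lemma exp_eq_fe (q a c : ℕ) :
    Complex.exp (2 * Real.pi * Complex.I * ((a : ℝ) * (c : ℝ) / (q : ℝ)))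
      = fe q ((a : ℤ) * (c : ℤ)) := by
  unfold fe
  congr 2
  push_cast
  ring

lemma reindex (q u v a b b' : ℕ) (hq : q = u * v) (hu : 0 < u) (hv : 0 < v)
    (hb'1 : 1 ≤ b') (hb'le : b' ≤ u) (hmod : b' % u = b % u) (hb'cop : Nat.Coprime b' u) :
    ∑ c ∈ (Finset.Icc 1 q).filter
        (fun c => Nat.Coprime c q ∧ (c : ℤ) ≡ (b : ℤ) [ZMOD (u : ℤ)]),
      Complex.exp (2 * Real.pi * Complex.I * ((a : ℝ) * (c : ℝ) / (q : ℝ)))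
    = ∑ t ∈ (Finset.range v).filter (fun t => Nat.Coprime (b' + u * t) v),
        fe q ((a : ℤ) * ((b' + u * t : ℕ) : ℤ)) := by
  -- facts about elements of the LHS index set
  have hmem : ∀ c, c ∈ (Finset.Icc 1 q).filter
      (fun c => Nat.Coprime c q ∧ (c : ℤ) ≡ (b : ℤ) [ZMOD (u : ℤ)]) →
      b' ≤ c ∧ u ∣ c - b' ∧ b' + u * ((c - b') / u) = c := by
    intro c hc
    rw [mem_filter, Finset.mem_Icc] at hc
    obtain ⟨⟨hc1, hcq⟩, hcop, hmodc⟩ := hc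
    have hmodc' : c % u = b % u := Int.natCast_modEq_iff.mp hmodc
    have hcb' : c ≡ b' [MOD u] := by
      unfold Nat.ModEq
      rw [hmodc', hmod]
    have hb'c : b' ≤ c := by
      by_contra hlt
      push_neg at hlt
      have h1 : u ∣ b' - c := (Nat.modEq_iff_dvd' hlt.le).mp hcb'
      have h2 : 0 < b' - c := by omega
      have := Nat.le_of_dvd h2 h1
      omega
    have hdvd : u ∣ c - b' := (Nat.modEq_iff_dvd' hb'c).mp hcb'.symm
    refine ⟨hb'c, hdvd, ?_⟩
    rw [Nat.mul_div_cancel' hdvd]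
    omega
  refine Finset.sum_nbij' (fun c => (c - b') / u) (fun t => b' + u * t) ?_ ?_ ?_ ?_ ?_
  · intro c hc
    obtain ⟨hb'c, hdvd, hct⟩ := hmem c hc
    rw [mem_filter, Finset.mem_Icc] at hc
    obtain ⟨⟨hc1, hcq⟩, hcop, hmodc⟩ := hc
    rw [mem_filter, mem_range]
    constructor
    · -- (c - b') / u < v
      by_contra hge
      push_neg at hge
      have : u * v ≤ u * ((c - b') / u) := Nat.mul_le_mul_left u hge
      have hc2 : b' + u * ((c - b') / u) = c := hct
      omega
    · rw [hct]
      exact Nat.Coprime.coprime_dvd_right ⟨u, by rw [hq]; ring⟩ hcop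
  · intro t ht
    rw [mem_filter, mem_range] at ht
    obtain ⟨htv, hcop⟩ := ht
    rw [mem_filter, Finset.mem_Icc]
    have hle : b' + u * t ≤ q := by
      have h1 : u * (t + 1) ≤ u * v := Nat.mul_le_mul_left u (by omega)
      rw [Nat.mul_add, Nat.mul_one] at h1
      omega
    have h1b : 1 ≤ b' + u * t := by omega
    refine ⟨⟨h1b, hle⟩, ?_, ?_⟩
    · rw [hq]
      exact Nat.Coprime.mul_right ((Nat.coprime_add_mul_left_left b' u t).mpr hb'cop) hcop
    · refine Int.natCast_modEq_iff.mpr ?_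
      unfold Nat.ModEq
      rw [Nat.add_mul_mod_self_left, hmod]
  · intro c hc
    exact (hmem c hc).2.2
  · intro t ht
    rw [Nat.add_sub_cancel_left, Nat.mul_div_cancel_left _ hu]
  · intro c hc
    rw [(hmem c hc).2.2]
    exact exp_eq_fe q a c


lemma factor_fe (q u v a b' t : ℕ) (hq : q = u * v) (hu : 0 < u) (hv : 0 < v) :
    fe q ((a : ℤ) * ((b' + u * t : ℕ) : ℤ))
      = fe q ((a : ℤ) * (b' : ℤ)) * fe v ((a : ℤ) * t) := by
  have h1 : fe v ((a : ℤ) * t) = fe q ((a : ℤ) * t * u) := by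
    rw [fe_amp hu ((a : ℤ) * t)]
    congr 1
    · rw [hq, Nat.mul_comm]
  rw [h1, fe_mul]
  congr 1
  push_cast
  ring

lemma exp_eq_fe' (u a b : ℕ) (vbar : ℤ) :
    Complex.exp (2 * Real.pi * Complex.I * ((a : ℝ) * (b : ℝ) * (vbar : ℝ) / (u : ℝ)))
      = fe u ((a : ℤ) * (b : ℤ) * vbar) := by
  unfold fe
  congr 2
  push_cast
  ring

theorem ramanujan_type_sum (q u v a b : ℕ) (hq : q = u * v) (hu : 0 < u) (hv : 0 < v)
    (hb : Nat.Coprime b u) (ha : Nat.Coprime a q) :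
    (Nat.Coprime u v → ∀ vbar : ℤ, vbar * (v : ℤ) ≡ 1 [ZMOD (u : ℤ)] →
      ∑ c ∈ (Finset.Icc 1 q).filter
          (fun c => Nat.Coprime c q ∧ (c : ℤ) ≡ (b : ℤ) [ZMOD (u : ℤ)]),
        Complex.exp (2 * Real.pi * Complex.I * ((a : ℝ) * (c : ℝ) / (q : ℝ)))
      = ((ArithmeticFunction.moebius v : ℤ) : ℂ) *
        Complex.exp (2 * Real.pi * Complex.I * ((a : ℝ) * (b : ℝ) * (vbar : ℝ) / (u : ℝ)))) ∧
    (¬ Nat.Coprime u v →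
      ∑ c ∈ (Finset.Icc 1 q).filter
          (fun c => Nat.Coprime c q ∧ (c : ℤ) ≡ (b : ℤ) [ZMOD (u : ℤ)]),
        Complex.exp (2 * Real.pi * Complex.I * ((a : ℝ) * (c : ℝ) / (q : ℝ))) = 0) := by
  have hq0 : 0 < q := by rw [hq]; positivity
  set b' : ℕ := if b % u = 0 then u else b % u with hb'def
  have hb'1 : 1 ≤ b' := by
    rw [hb'def]
    split
    · omega
    · omega
  have hb'le : b' ≤ u := by
    rw [hb'def]
    split
    · omega
    · exact (Nat.mod_lt b hu).le
  have hmod : b' % u = b % u := by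
    rw [hb'def]
    split
    · rename_i h0
      rw [Nat.mod_self, h0]
    · exact Nat.mod_eq_of_lt (Nat.mod_lt b hu)
  have hb'cop : Nat.Coprime b' u := by
    have hgcd : Nat.gcd (b % u) u = 1 := by
      have h1 : Nat.gcd u b = Nat.gcd (b % u) u := Nat.gcd_rec u b
      rw [← h1, Nat.gcd_comm]
      exact hb
    rw [hb'def]
    split
    · rename_i h0
      have hub : u ∣ b := Nat.dvd_of_mod_eq_zero h0
      have h1 : u ∣ Nat.gcd b u := Nat.dvd_gcd hub dvd_rfl
      have hu1 : u = 1 := Nat.eq_one_of_dvd_one (hb ▸ h1)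
      simp [Nat.Coprime, hu1]
    · exact hgcd
  have hav : Nat.Coprime a v :=
    Nat.Coprime.coprime_dvd_right ⟨u, by rw [hq]; ring⟩ ha
  -- main rewriting of the sum
  have hmain : ∑ c ∈ (Finset.Icc 1 q).filter
        (fun c => Nat.Coprime c q ∧ (c : ℤ) ≡ (b : ℤ) [ZMOD (u : ℤ)]),
      Complex.exp (2 * Real.pi * Complex.I * ((a : ℝ) * (c : ℝ) / (q : ℝ)))
      = fe q ((a : ℤ) * (b' : ℤ)) * (((ArithmeticFunction.moebius v : ℤ) : ℂ) *
          ∑ t ∈ (Finset.range v).filter (fun t => v ∣ b' + u * t), fe v ((a : ℤ) * t)) := by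
    rw [reindex q u v a b b' hq hu hv hb'1 hb'le hmod hb'cop]
    have hfac : ∀ t ∈ (Finset.range v).filter (fun t => Nat.Coprime (b' + u * t) v),
        fe q ((a : ℤ) * ((b' + u * t : ℕ) : ℤ))
          = fe q ((a : ℤ) * (b' : ℤ)) * fe v ((a : ℤ) * t) :=
      fun t _ => factor_fe q u v a b' t hq hu hv
    rw [Finset.sum_congr rfl hfac, ← Finset.mul_sum]
    congr 1
    rw [moebius_expand v hv (fun t => b' + u * t) (fun t => fe v ((a : ℤ) * t))]
    refine Finset.sum_eq_single_of_mem v (Nat.mem_divisors_self v hv.ne') ?_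
    intro d hd hdne
    rw [Nat.mem_divisors] at hd
    have hdlt : d < v := Nat.lt_of_le_of_ne (Nat.le_of_dvd hv hd.1) hdne
    rw [J_zero v a d b' u hv hav hd.1 hdlt, mul_zero]
  constructor
  · -- coprime case
    intro huv vbar hvbar
    obtain ⟨t₀, ht₀v, ht₀dvd, hset⟩ := Jv_singleton v u b' hv huv
    rw [hmain, hset, Finset.sum_singleton]
    have hfinal : fe q ((a : ℤ) * (b' : ℤ)) * fe v ((a : ℤ) * t₀)
        = fe u ((a : ℤ) * (b : ℤ) * vbar) := by
      have h1 : fe v ((a : ℤ) * t₀) = fe q ((a : ℤ) * t₀ * u) := by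
        rw [fe_amp hu ((a : ℤ) * t₀)]
        congr 1
        · rw [hq, Nat.mul_comm]
      have h2 : fe u ((a : ℤ) * (b : ℤ) * vbar) = fe q ((a : ℤ) * b * vbar * v) := by
        rw [fe_amp hv ((a : ℤ) * b * vbar)]
        congr 1
        · rw [hq]
      rw [h1, fe_mul, h2]
      refine fe_congr hq0 ?_
      have hqz : (q : ℤ) = (u : ℤ) * v := by exact_mod_cast hq
      have hu_dvd : (u : ℤ) ∣ ((b' : ℤ) + u * t₀) - (b : ℤ) * vbar * v := by
        have d1 : (u : ℤ) ∣ (b' : ℤ) - b := by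
          have : b' ≡ b [MOD u] := hmod
          exact_mod_cast (Int.natCast_modEq_iff.mpr this).symm.dvd
        have d2 : (u : ℤ) ∣ 1 - vbar * v := hvbar.dvd
        have heq : ((b' : ℤ) + u * t₀) - (b : ℤ) * vbar * v
            = ((b' : ℤ) - b) + (b : ℤ) * (1 - vbar * v) + u * t₀ := by ring
        rw [heq]
        exact dvd_add (dvd_add d1 (d2.mul_left _)) ⟨t₀, rfl⟩
      have hv_dvd : (v : ℤ) ∣ ((b' : ℤ) + u * t₀) - (b : ℤ) * vbar * v := by
        have d1 : (v : ℤ) ∣ ((b' : ℤ) + u * t₀) := by exact_mod_cast Int.natCast_dvd_natCast.mpr ht₀dvd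
        have d2 : (v : ℤ) ∣ (b : ℤ) * vbar * v := ⟨(b : ℤ) * vbar, by ring⟩
        exact dvd_sub d1 d2
      have hcop : IsCoprime (u : ℤ) (v : ℤ) := Nat.isCoprime_iff_coprime.mpr huv
      have hq_dvd : (q : ℤ) ∣ ((b' : ℤ) + u * t₀) - (b : ℤ) * vbar * v := by
        rw [hqz]
        exact hcop.mul_dvd hu_dvd hv_dvd
      have heq2 : ((a : ℤ) * b' + (a : ℤ) * t₀ * u) - (a : ℤ) * b * vbar * v
          = (a : ℤ) * (((b' : ℤ) + u * t₀) - (b : ℤ) * vbar * v) := by ring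
      rw [heq2]
      exact hq_dvd.mul_left _
    rw [exp_eq_fe', ← hfinal]
    ring
  · -- non-coprime case
    intro huv
    rw [hmain, Jv_empty v u b' hv huv hb'cop, Finset.sum_empty, mul_zero, mul_zero]
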